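/- (Gronwall with dyadic decomposition / logarithmic forcing.) Let E : [0,T) → [0,∞) be continuous, A, B ≥ 0 constants, and h : [0,T) → [0,∞) a measurable function such that for every T' < T, ∫_0^{T'} h(τ)² dτ ≤ B² (log(2+T'))². Suppose that for all t ∈ [0,T), E(t) ≤ E(0) + ∫_0^t ( A⟨τ⟩^{-5/4} + ⟨τ⟩^{-1} h(τ) ) E(τ) dτ. Then there is an absolute constant C such that E(t) ≤ E(0) · exp( C(A + B) ) for all t ∈ [0,T). -/

import Mathlib

open Real MeasureTheory Set intervalIntegral

namespace GD

noncomputable def wt (τ : ℝ) : ℝ := (Real.sqrt (1 + τ ^ 2))⁻¹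
noncomputable def ph (τ : ℝ) : ℝ := (Real.sqrt (1 + τ ^ 2)) ^ (-(5 / 4 : ℝ))

lemma one_le_sqrt' (τ : ℝ) : 1 ≤ Real.sqrt (1 + τ ^ 2) := by
  have := Real.sqrt_le_sqrt (show (1:ℝ) ≤ 1 + τ ^ 2 by nlinarith [sq_nonneg τ])
  simpa using this

lemma wt_nonneg (τ : ℝ) : 0 ≤ wt τ := inv_nonneg.2 (Real.sqrt_nonneg _)
lemma wt_le_one (τ : ℝ) : wt τ ≤ 1 := inv_le_one_of_one_le₀ (one_le_sqrt' τ)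

lemma wt_le_inv (τ : ℝ) (hτ : 0 < τ) : wt τ ≤ τ⁻¹ := by
  apply inv_anti₀ hτ
  calc τ = Real.sqrt (τ ^ 2) := by rw [Real.sqrt_sq hτ.le]
  _ ≤ Real.sqrt (1 + τ ^ 2) := Real.sqrt_le_sqrt (by linarith)

lemma wt_cont : Continuous wt := by
  apply Continuous.inv₀ (Real.continuous_sqrt.comp (by continuity))
  exact fun x => ne_of_gt (Real.sqrt_pos.2 (by positivity))

lemma ph_nonneg (τ : ℝ) : 0 ≤ ph τ := Real.rpow_nonneg (Real.sqrt_nonneg _) _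

lemma ph_le_one (τ : ℝ) : ph τ ≤ 1 :=
  Real.rpow_le_one_of_one_le_of_nonpos (one_le_sqrt' τ) (by norm_num)

lemma ph_cont : Continuous ph := by
  apply Continuous.rpow_const (Real.continuous_sqrt.comp (by continuity))
  exact fun x => Or.inl (ne_of_gt (Real.sqrt_pos.2 (by positivity)))

lemma amgm (lam x : ℝ) (hl : 0 < lam) : x ≤ lam / 2 + x ^ 2 / (2 * lam) := by
  rw [div_add_div _ _ two_ne_zero (by positivity), le_div_iff₀ (by positivity)]
  nlinarith [sq_nonneg (x - lam)]

lemma ph_le_rpow (τ : ℝ) (hτ : 1 ≤ τ) : ph τ ≤ τ ^ (-(5/4 : ℝ)) := by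
  apply Real.rpow_le_rpow_of_nonpos (by linarith) _ (by norm_num)
  calc τ = Real.sqrt (τ ^ 2) := by rw [Real.sqrt_sq (by linarith)]
  _ ≤ Real.sqrt (1 + τ ^ 2) := Real.sqrt_le_sqrt (by linarith)

lemma log_le_four_rpow (x : ℝ) (hx : 0 < x) : Real.log x ≤ 4 * x ^ ((1:ℝ)/4) := by
  have h1 : Real.log (x ^ ((1:ℝ)/4)) ≤ x ^ ((1:ℝ)/4) - 1 :=
    Real.log_le_sub_one_of_pos (Real.rpow_pos_of_pos hx _)
  rw [Real.log_rpow hx] at h1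
  nlinarith [Real.rpow_pos_of_pos hx ((1:ℝ)/4)]

lemma logsq_le (x : ℝ) (hx : 1 ≤ x) : Real.log x ^ 2 ≤ 16 * Real.sqrt x := by
  have h0 : (0:ℝ) < x := by linarith
  have h1 : Real.log x ≤ 4 * x ^ ((1:ℝ)/4) := log_le_four_rpow x h0
  have h2 : 0 ≤ Real.log x := Real.log_nonneg hx
  have h3 : (x ^ ((1:ℝ)/4)) ^ (2:ℕ) = Real.sqrt x := by
    rw [← Real.rpow_natCast (x ^ ((1:ℝ)/4)) 2, ← Real.rpow_mul h0.le, Real.sqrt_eq_rpow]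
    norm_num
  have h4 : Real.log x ^ 2 ≤ (4 * x ^ ((1:ℝ)/4)) ^ (2:ℕ) := pow_le_pow_left₀ h2 h1 2
  calc Real.log x ^ 2 ≤ (4 * x ^ ((1:ℝ)/4)) ^ (2:ℕ) := h4
  _ = 16 * (x ^ ((1:ℝ)/4)) ^ (2:ℕ) := by ring
  _ = 16 * Real.sqrt x := by rw [h3]

lemma mono_set0 {f : ℝ → ℝ} {a t : ℝ} (h : IntervalIntegrable f volume 0 t)
    (ha : 0 ≤ a) (hat : a ≤ t) : IntervalIntegrable f volume 0 a :=
  h.mono_set (by rw [uIcc_of_le ha, uIcc_of_le (ha.trans hat)]; exact Icc_subset_Icc le_rfl hat)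

lemma mono_seta {f : ℝ → ℝ} {a t : ℝ} (h : IntervalIntegrable f volume 0 t)
    (ha : 0 ≤ a) (hat : a ≤ t) : IntervalIntegrable f volume a t :=
  h.mono_set (by rw [uIcc_of_le hat, uIcc_of_le (ha.trans hat)]; exact Icc_subset_Icc ha le_rfl)

lemma intInt_dom (f g : ℝ → ℝ) (t : ℝ) (ht : 0 ≤ t)
    (hfm : AEStronglyMeasurable f (volume.restrict (Ioc 0 t)))
    (hg : IntervalIntegrable g volume 0 t)
    (hbd : ∀ τ ∈ Ioc (0:ℝ) t, ‖f τ‖ ≤ g τ) :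
    IntervalIntegrable f volume 0 t := by
  rw [intervalIntegrable_iff_integrableOn_Ioc_of_le ht] at hg ⊢
  exact hg.integrable.mono' hfm
    ((ae_restrict_iff' measurableSet_Ioc).2 (Filter.Eventually.of_forall hbd))

lemma intInt_h (h : ℝ → ℝ) (hm : Measurable h) (hh : ∀ τ, 0 ≤ h τ) (t : ℝ) (ht : 0 ≤ t)
    (hi2 : IntervalIntegrable (fun τ => h τ ^ 2) volume 0 t) :
    IntervalIntegrable h volume 0 t := by
  apply intInt_dom h (fun τ => (1 + h τ ^ 2) / 2) t ht hm.aestronglyMeasurable.restrict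
  · exact ((_root_.intervalIntegrable_const).add hi2).div_const _
  · intro τ _
    rw [Real.norm_eq_abs, abs_of_nonneg (hh τ)]
    nlinarith [sq_nonneg (h τ - 1)]

lemma intInt_wh (h : ℝ → ℝ) (hm : Measurable h) (hh : ∀ τ, 0 ≤ h τ) (t : ℝ) (ht : 0 ≤ t)
    (hi2 : IntervalIntegrable (fun τ => h τ ^ 2) volume 0 t) :
    IntervalIntegrable (fun τ => wt τ * h τ) volume 0 t := by
  apply intInt_dom _ h t ht ((wt_cont.measurable.mul hm).aestronglyMeasurable.restrict)
    (intInt_h h hm hh t ht hi2)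
  intro τ _
  rw [Real.norm_eq_abs, Pi.mul_apply, abs_of_nonneg (mul_nonneg (wt_nonneg τ) (hh τ))]
  nlinarith [wt_le_one τ, hh τ, wt_nonneg τ]

lemma block (a t c S : ℝ) (h : ℝ → ℝ)
    (hat : a ≤ t) (hc : 0 ≤ c)
    (hwc : ∀ τ ∈ Icc a t, wt τ ≤ c) (hh : ∀ τ, 0 ≤ h τ)
    (hS : (∫ τ in a..t, h τ ^ 2) ≤ S)
    (hih2 : IntervalIntegrable (fun τ => h τ ^ 2) volume a t)
    (hiwh : IntervalIntegrable (fun τ => wt τ * h τ) volume a t)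
    (μ : ℝ) (hμ : 0 < μ) :
    (∫ τ in a..t, wt τ * h τ) ≤ c * μ * (t - a) / 2 + c * S / (2 * μ) := by
  have h1 : (∫ τ in a..t, wt τ * h τ)
      ≤ ∫ τ in a..t, (c * μ / 2 + c / (2*μ) * h τ ^ 2) := by
    apply integral_mono_on hat hiwh
    · exact (_root_.intervalIntegrable_const).add (hih2.const_mul _)
    · intro τ hτ
      have h2 : wt τ * h τ ≤ c * h τ := mul_le_mul_of_nonneg_right (hwc τ hτ) (hh τ)
      have h3 := amgm μ (h τ) hμ
      calc wt τ * h τ ≤ c * h τ := h2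
      _ ≤ c * (μ/2 + h τ ^ 2 / (2*μ)) := mul_le_mul_of_nonneg_left h3 hc
      _ = c * μ / 2 + c / (2*μ) * h τ ^ 2 := by ring
  rw [integral_add (_root_.intervalIntegrable_const) (hih2.const_mul _),
    intervalIntegral.integral_const, intervalIntegral.integral_const_mul, smul_eq_mul] at h1
  have h4 : c / (2*μ) * (∫ τ in a..t, h τ ^ 2) ≤ c / (2*μ) * S :=
    mul_le_mul_of_nonneg_left hS (by positivity)
  calc (∫ τ in a..t, wt τ * h τ) ≤ (t-a) * (c*μ/2) + c/(2*μ) * S := by linarith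
  _ = c * μ * (t - a) / 2 + c * S / (2 * μ) := by ring

lemma nonpos_of_forall_mu (I k : ℝ) (hk : 0 < k) (H : ∀ μ, 0 < μ → I ≤ μ * k) : I ≤ 0 := by
  apply le_of_forall_pos_le_add
  intro ε hε
  have := H (ε / k) (by positivity)
  rw [div_mul_cancel₀ _ hk.ne'] at this
  linarith

lemma block6 (B a t c d v w : ℝ) (h : ℝ → ℝ) (hat : a ≤ t) (hc : 0 < c) (hw : 0 < w)
    (hwc : ∀ τ ∈ Icc a t, wt τ ≤ c) (hh : ∀ τ, 0 ≤ h τ) (htd : t - a ≤ d) (hcd : c * d = 1)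
    (hcvw : c * v ^ 2 = w ^ 2) (hB : 0 ≤ B)
    (hS : (∫ τ in a..t, h τ ^ 2) ≤ 32 * B ^ 2 * v ^ 2)
    (hih2 : IntervalIntegrable (fun τ => h τ ^ 2) volume a t)
    (hiwh : IntervalIntegrable (fun τ => wt τ * h τ) volume a t) :
    (∫ τ in a..t, wt τ * h τ) ≤ 6 * B * w := by
  rcases eq_or_lt_of_le hB with hB0 | hB0
  · have hS0 : (∫ τ in a..t, h τ ^ 2) ≤ 0 := by
      rw [← hB0] at hS; simpa using hS
    have hI : (∫ τ in a..t, wt τ * h τ) ≤ 0 := by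
      apply nonpos_of_forall_mu _ (1/2) (by norm_num)
      intro μ hμ
      have := block a t c 0 h hat hc.le hwc hh hS0 hih2 hiwh μ hμ
      have h2 : c * μ * (t - a) / 2 ≤ μ * (1/2) := by
        have : c * μ * (t - a) ≤ c * μ * d := by
          apply mul_le_mul_of_nonneg_left htd (by positivity)
        nlinarith
      have h3 : c * 0 / (2 * μ) = 0 := by ring
      linarith
    calc (∫ τ in a..t, wt τ * h τ) ≤ 0 := hI
    _ ≤ 6 * B * w := by positivity
  · have hμ : (0:ℝ) < 8 * B * w := by positivity
    have := block a t c (32 * B ^ 2 * v ^ 2) h hat hc.le hwc hh hS hih2 hiwh _ hμ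
    have e1 : c * (8 * B * w) * (t - a) / 2 ≤ 4 * B * w := by
      have h2 : c * (8 * B * w) * (t - a) ≤ c * (8 * B * w) * d := by
        apply mul_le_mul_of_nonneg_left htd (by positivity)
      nlinarith
    have e2 : c * (32 * B ^ 2 * v ^ 2) / (2 * (8 * B * w)) = 2 * B * w := by
      field_simp
      nlinarith [hcvw]
    linarith

lemma forcing_h (T B : ℝ) (h : ℝ → ℝ) (hB : 0 ≤ B) (hm : Measurable h) (hh : ∀ τ, 0 ≤ h τ)
    (hi2 : ∀ t ∈ Ico (0:ℝ) T, IntervalIntegrable (fun τ => h τ ^ 2) volume 0 t)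
    (hsq : ∀ T' ∈ Ico (0:ℝ) T, (∫ τ in (0:ℝ)..T', h τ ^ 2) ≤ B ^ 2 * Real.log (2 + T') ^ 2) :
    ∀ t ∈ Ico (0:ℝ) T, (∫ τ in (0:ℝ)..t, wt τ * h τ) ≤ 46 * B := by
  set z : ℝ := (2:ℝ) ^ ((1:ℝ)/4) with hzdef
  have hz0 : (0:ℝ) < z := Real.rpow_pos_of_pos two_pos _
  have hz4 : z ^ (4:ℕ) = 2 := by
    rw [hzdef, ← Real.rpow_natCast ((2:ℝ) ^ ((1:ℝ)/4)) 4, ← Real.rpow_mul (by norm_num)]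
    norm_num
  have hz : (20/17 : ℝ) ≤ z := by
    by_contra hlt
    push_neg at hlt
    have h2 : z ^ (4:ℕ) < (20/17:ℝ) ^ (4:ℕ) := by
      apply pow_lt_pow_left₀ hlt hz0.le; norm_num
    rw [hz4] at h2; norm_num at h2
  have hz1 : (1:ℝ) ≤ z := by linarith
  have hzi : z⁻¹ ≤ 17/20 := by
    rw [inv_le_comm₀ hz0 (by norm_num)]
    linarith
  -- bound on ∫₀^s h²
  have hSb : ∀ n : ℕ, ∀ s ∈ Ico (0:ℝ) T, s ≤ 2 * 2 ^ n →
      (∫ τ in (0:ℝ)..s, h τ ^ 2) ≤ 32 * B ^ 2 * (z ^ n) ^ 2 := by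
    intro n s hs hsn
    have h2s : (1:ℝ) ≤ 2 + s := by linarith [hs.1]
    have hlog := logsq_le (2 + s) h2s
    have hp : (1:ℝ) ≤ (2:ℝ) ^ n := one_le_pow₀ one_le_two
    have h4 : 2 + s ≤ 4 * 2 ^ n := by linarith
    have h5 : Real.sqrt (2+s) ≤ Real.sqrt (4 * 2 ^ n) := Real.sqrt_le_sqrt h4
    have h6 : Real.sqrt (4 * 2 ^ n) = 2 * (z ^ n) ^ 2 := by
      have h7 : (2:ℝ) ^ n = (z ^ n) ^ 4 := by rw [← pow_mul, mul_comm, pow_mul, hz4]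
      rw [show (4:ℝ) * 2 ^ n = (2 * (z ^ n) ^ 2) ^ 2 by rw [h7]; ring,
        Real.sqrt_sq (by positivity)]
    calc (∫ τ in (0:ℝ)..s, h τ ^ 2) ≤ B ^ 2 * Real.log (2+s) ^ 2 := hsq s hs
    _ ≤ B ^ 2 * (16 * Real.sqrt (2+s)) := mul_le_mul_of_nonneg_left hlog (sq_nonneg B)
    _ ≤ B ^ 2 * (16 * (2 * (z ^ n) ^ 2)) := by
        apply mul_le_mul_of_nonneg_left _ (sq_nonneg B)
        rw [← h6]; linarith
    _ = 32 * B ^ 2 * (z ^ n) ^ 2 := by ring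
  have key : ∀ n : ℕ, ∀ s ∈ Ico (0:ℝ) T, s ≤ 2 ^ n →
      (∫ τ in (0:ℝ)..s, wt τ * h τ) ≤ B * (46 - 40 * (z ^ n)⁻¹) := by
    intro n
    induction n with
    | zero =>
      intro s hs hs1
      rw [pow_zero] at hs1
      have h6 := block6 B 0 s 1 1 1 1 h hs.1 one_pos one_pos
        (fun τ _ => wt_le_one τ) hh (by linarith) (by norm_num) (by norm_num) hB
        (by simpa using hSb 0 s hs (by norm_num; linarith))
        (hi2 s hs) (intInt_wh h hm hh s hs.1 (hi2 s hs))
      rw [pow_zero, inv_one]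
      linarith
    | succ n ih =>
      intro s hs hsn
      have hu0 : (0:ℝ) < z ^ n := by positivity
      by_cases hcase : s ≤ 2 ^ n
      · have h1 := ih s hs hcase
        have h2 : (z ^ (n+1))⁻¹ ≤ (z ^ n)⁻¹ := by
          apply inv_anti₀ hu0
          calc z ^ n = z ^ n * 1 := (mul_one _).symm
          _ ≤ z ^ n * z := by nlinarith
          _ = z ^ (n+1) := (pow_succ z n).symm
        nlinarith [mul_nonneg hB (sub_nonneg.2 h2)]
      · push_neg at hcase
        have ha0 : (0:ℝ) ≤ 2 ^ n := by positivity
        have hat : (2:ℝ) ^ n ≤ s := hcase.le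
        have haT : (2:ℝ) ^ n ∈ Ico (0:ℝ) T := ⟨ha0, lt_trans hcase hs.2⟩
        have hIa := ih ((2:ℝ) ^ n) haT le_rfl
        have hi2s := hi2 s hs
        have hiwhs := intInt_wh h hm hh s hs.1 hi2s
        have hadd := integral_add_adjacent_intervals (f := fun τ => wt τ * h τ) (μ := volume)
          (mono_set0 hiwhs ha0 hat) (mono_seta hiwhs ha0 hat)
        have hp1 : (1:ℝ) ≤ (2:ℝ) ^ n := one_le_pow₀ one_le_two
        have hu4 : (2:ℝ) ^ n = (z ^ n) ^ 4 := by rw [← pow_mul, mul_comm, pow_mul, hz4]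
        have hSs := hSb n s hs (by rw [pow_succ] at hsn; linarith)
        have hnn : (0:ℝ) ≤ ∫ τ in (0:ℝ)..(2:ℝ)^n, h τ ^ 2 :=
          integral_nonneg ha0 (fun u _ => sq_nonneg _)
        have hadd2 := integral_add_adjacent_intervals (f := fun τ => h τ ^ 2) (μ := volume)
          (mono_set0 hi2s ha0 hat) (mono_seta hi2s ha0 hat)
        have hSblock : (∫ τ in (2:ℝ)^n..s, h τ ^ 2) ≤ 32 * B ^ 2 * (z ^ n) ^ 2 := by
          linarith
        have hwc : ∀ τ ∈ Icc ((2:ℝ)^n) s, wt τ ≤ ((2:ℝ)^n)⁻¹ := by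
          intro τ hτ
          have hτ0 : (0:ℝ) < τ := lt_of_lt_of_le (by positivity) hτ.1
          exact (wt_le_inv τ hτ0).trans (inv_anti₀ (by positivity) hτ.1)
        have hblk := block6 B ((2:ℝ)^n) s ((2:ℝ)^n)⁻¹ ((2:ℝ)^n) (z^n) ((z^n)⁻¹) h hat
          (by positivity) (by positivity) hwc hh
          (by rw [pow_succ] at hsn; linarith) (by field_simp)
          (by rw [hu4]; field_simp) hB hSblock
          (mono_seta hi2s ha0 hat) (mono_seta hiwhs ha0 hat)
        have hstep : 40 * (z ^ (n+1))⁻¹ ≤ 34 * (z ^ n)⁻¹ := by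
          rw [pow_succ, mul_inv]
          have h9 : (z ^ n)⁻¹ * z⁻¹ ≤ (z ^ n)⁻¹ * (17/20) :=
            mul_le_mul_of_nonneg_left hzi (le_of_lt (inv_pos.2 hu0))
          nlinarith
        nlinarith [hadd, hIa, hblk, mul_le_mul_of_nonneg_left hstep hB]
  intro t ht
  obtain ⟨n, hn⟩ := pow_unbounded_of_one_lt (y := (2:ℝ)) t one_lt_two
  have h1 := key n t ht hn.le
  have h2 : (0:ℝ) ≤ (z ^ n)⁻¹ := by positivity
  nlinarith [mul_nonneg hB h2]

lemma partA (t : ℝ) (ht : 0 ≤ t) : (∫ τ in (0:ℝ)..t, ph τ) ≤ 5 := by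
  have hInt : ∀ a b : ℝ, IntervalIntegrable ph volume a b :=
    fun a b => ph_cont.intervalIntegrable a b
  by_cases h1 : t ≤ 1
  · have h2 : (∫ τ in (0:ℝ)..t, ph τ) ≤ ∫ _τ in (0:ℝ)..t, (1:ℝ) := by
      apply integral_mono_on ht (hInt 0 t) (_root_.intervalIntegrable_const)
      exact fun τ _ => ph_le_one τ
    have h3 : (∫ _τ in (0:ℝ)..t, (1:ℝ)) = t := by simp
    linarith
  · push_neg at h1
    have hsplit := integral_add_adjacent_intervals (f := ph) (μ := volume) (hInt 0 1) (hInt 1 t)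
    have e1 : (∫ τ in (0:ℝ)..1, ph τ) ≤ 1 := by
      have h2 : (∫ τ in (0:ℝ)..1, ph τ) ≤ ∫ _τ in (0:ℝ)..1, (1:ℝ) :=
        integral_mono_on (by norm_num) (hInt 0 1) (_root_.intervalIntegrable_const)
          (fun τ _ => ph_le_one τ)
      have h3 : (∫ _τ in (0:ℝ)..1, (1:ℝ)) = 1 := by simp
      linarith
    have hIr : IntervalIntegrable (fun τ : ℝ => τ ^ (-(5/4):ℝ)) volume 1 t := by
      apply ContinuousOn.intervalIntegrable
      apply ContinuousOn.rpow_const continuousOn_id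
      intro x hx
      rw [uIcc_of_le h1.le] at hx
      exact Or.inl (by simpa using ne_of_gt (lt_of_lt_of_le one_pos hx.1))
    have e2 : (∫ τ in (1:ℝ)..t, ph τ) ≤ ∫ τ in (1:ℝ)..t, τ ^ (-(5/4):ℝ) := by
      apply integral_mono_on h1.le (hInt 1 t) hIr
      intro τ hτ; exact ph_le_rpow τ hτ.1
    have e3 : (∫ τ in (1:ℝ)..t, (τ:ℝ) ^ (-(5/4):ℝ))
        = (t ^ (-(1/4):ℝ) - 1 ^ (-(1/4):ℝ)) / (-(1/4)) := by
      rw [integral_rpow (Or.inr ⟨by norm_num,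
        by rw [uIcc_of_le h1.le]; intro hx; exact absurd hx.1 (by norm_num)⟩)]
      norm_num
    have e4 : (0:ℝ) ≤ t ^ (-(1/4):ℝ) := Real.rpow_nonneg ht _
    have e5 : (1:ℝ) ^ (-(1/4):ℝ) = 1 := Real.one_rpow _
    rw [e5] at e3
    have e6 : (∫ τ in (1:ℝ)..t, ph τ) ≤ 4 := by
      rw [e3] at e2
      calc (∫ τ in (1:ℝ)..t, ph τ) ≤ (t ^ (-(1/4):ℝ) - 1) / (-(1/4)) := e2
      _ = 4 - 4 * t ^ (-(1/4):ℝ) := by ring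
      _ ≤ 4 := by linarith
    linarith

lemma gronwall (T L : ℝ) (f E : ℝ → ℝ)
    (hf0 : ∀ τ, 0 ≤ f τ) (hE0 : ∀ τ, 0 ≤ E τ)
    (hfi : ∀ t ∈ Ico (0:ℝ) T, IntervalIntegrable f volume 0 t)
    (hfEi : ∀ t ∈ Ico (0:ℝ) T, IntervalIntegrable (fun τ => f τ * E τ) volume 0 t)
    (hle : ∀ t ∈ Ico (0:ℝ) T, E t ≤ E 0 + ∫ τ in (0:ℝ)..t, f τ * E τ)
    (hL : ∀ t ∈ Ico (0:ℝ) T, (∫ τ in (0:ℝ)..t, f τ) ≤ L) :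
    ∀ t ∈ Ico (0:ℝ) T, E t ≤ E 0 * Real.exp (2 * L) := by
  intro t ht
  have hfi' := hfi t ht
  have hfEi' := hfEi t ht
  set G : ℝ → ℝ := fun u => E 0 + ∫ τ in (0:ℝ)..u, f τ * E τ with hGdef
  have hGnn : ∀ a, 0 ≤ a → a ≤ t → 0 ≤ G a := by
    intro a ha hat
    have h0 : (0:ℝ) ≤ ∫ τ in (0:ℝ)..a, f τ * E τ :=
      integral_nonneg ha (fun u _ => mul_nonneg (hf0 u) (hE0 u))
    simp only [hGdef]
    linarith [hE0 0]
  have hGadd : ∀ a b, 0 ≤ a → a ≤ b → b ≤ t →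
      G b = G a + ∫ τ in a..b, f τ * E τ := by
    intro a b ha hab hbt
    have h1 := integral_add_adjacent_intervals (f := fun τ => f τ * E τ) (μ := volume)
      (mono_set0 hfEi' ha (hab.trans hbt)) (mono_seta (mono_set0 hfEi' (ha.trans hab) hbt) ha hab)
    simp only [hGdef]
    rw [← h1]; ring
  have hGmono : ∀ a b, 0 ≤ a → a ≤ b → b ≤ t → G a ≤ G b := by
    intro a b ha hab hbt
    rw [hGadd a b ha hab hbt]
    have h0 : (0:ℝ) ≤ ∫ τ in a..b, f τ * E τ :=
      integral_nonneg hab (fun u _ => mul_nonneg (hf0 u) (hE0 u))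
    linarith
  have hEleG : ∀ a, 0 ≤ a → a ≤ t → E a ≤ G a := by
    intro a ha hat
    exact hle a ⟨ha, lt_of_le_of_lt hat ht.2⟩
  have chunk : ∀ a b, 0 ≤ a → a ≤ b → b ≤ t → (∫ τ in a..b, f τ) ≤ 1/2 →
      G b ≤ G a * Real.exp (2 * ∫ τ in a..b, f τ) := by
    intro a b ha hab hbt hs
    set s := ∫ τ in a..b, f τ with hsdef
    have hs0 : 0 ≤ s := integral_nonneg hab (fun u _ => hf0 u)
    have hkey : (∫ τ in a..b, f τ * E τ) ≤ s * G b := by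
      have h1 : (∫ τ in a..b, f τ * E τ) ≤ ∫ τ in a..b, f τ * G b := by
        apply integral_mono_on hab
          (mono_seta (mono_set0 hfEi' (ha.trans hab) hbt) ha hab)
          ((mono_seta (mono_set0 hfi' (ha.trans hab) hbt) ha hab).mul_const _)
        intro τ hτ
        have hEτ : E τ ≤ G b :=
          (hEleG τ (ha.trans hτ.1) (hτ.2.trans hbt)).trans
            (hGmono τ b (ha.trans hτ.1) hτ.2 hbt)
        exact mul_le_mul_of_nonneg_left hEτ (hf0 τ)
      rw [intervalIntegral.integral_mul_const] at h1
      linarith [h1]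
    have hGb : G b ≤ G a + s * G b := by
      have he := hGadd a b ha hab hbt
      linarith [hkey]
    have hexp : 1 + 2 * s ≤ Real.exp (2 * s) := by
      have := Real.add_one_le_exp (2 * s)
      linarith
    have hGbnn := hGnn b (ha.trans hab) hbt
    have hGann := hGnn a ha (hab.trans hbt)
    nlinarith [mul_le_mul_of_nonneg_left hexp hGann, mul_nonneg hGbnn hs0,
      mul_nonneg (mul_nonneg hGbnn hs0) hs0]
  have main : ∀ n : ℕ, ∀ a b : ℝ, 0 ≤ a → a ≤ b → b ≤ t → (∫ τ in a..b, f τ) ≤ (n:ℝ) / 2 →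
      G b ≤ G a * Real.exp (2 * ∫ τ in a..b, f τ) := by
    intro n
    induction n with
    | zero =>
      intro a b ha hab hbt hn
      push_cast at hn
      exact chunk a b ha hab hbt (by linarith)
    | succ n ih =>
      intro a b ha hab hbt hn
      set s := ∫ τ in a..b, f τ with hsdef
      by_cases hhalf : s ≤ 1/2
      · exact chunk a b ha hab hbt hhalf
      · push_neg at hhalf
        have hs0 : 0 ≤ s := integral_nonneg hab (fun u _ => hf0 u)
        have hFcont : ContinuousOn (fun x => ∫ τ in a..x, f τ) (Icc a b) := by
          have h1 : IntervalIntegrable f volume a b :=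
            mono_seta (mono_set0 hfi' (ha.trans hab) hbt) ha hab
          have := continuousOn_primitive_interval' h1 left_mem_uIcc
          rwa [uIcc_of_le hab] at this
        have hmem : s - 1/2 ∈ Icc ((∫ τ in a..a, f τ)) ((∫ τ in a..b, f τ)) := by
          rw [integral_same]
          exact ⟨by linarith, by linarith⟩
        obtain ⟨c, hc, hFc⟩ := intermediate_value_Icc hab hFcont hmem
        have hac : a ≤ c := hc.1
        have hcb : c ≤ b := hc.2
        have hfab : IntervalIntegrable f volume a b :=
          mono_seta (mono_set0 hfi' (ha.trans hab) hbt) ha hab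
        have hfac := hfab.mono_set
          (by rw [uIcc_of_le hac, uIcc_of_le hab]; exact Icc_subset_Icc le_rfl hcb)
        have hfcb := hfab.mono_set
          (by rw [uIcc_of_le hcb, uIcc_of_le hab]; exact Icc_subset_Icc hac le_rfl)
        have haddf := integral_add_adjacent_intervals (μ := volume) hfac hfcb
        have hFc' : (∫ τ in a..c, f τ) = s - 1/2 := hFc
        have hcb2 : (∫ τ in c..b, f τ) = 1/2 := by
          rw [hFc'] at haddf; linarith
        have h1 := ih a c ha hac (hcb.trans hbt) (by rw [hFc']; push_cast at hn ⊢; linarith)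
        have h2 := chunk c b (ha.trans hac) hcb hbt (by rw [hcb2])
        calc G b ≤ G c * Real.exp (2 * ∫ τ in c..b, f τ) := h2
        _ ≤ (G a * Real.exp (2 * ∫ τ in a..c, f τ)) * Real.exp (2 * ∫ τ in c..b, f τ) :=
          mul_le_mul_of_nonneg_right h1 (Real.exp_nonneg _)
        _ = G a * Real.exp (2 * ((∫ τ in a..c, f τ) + ∫ τ in c..b, f τ)) := by
          rw [mul_assoc, ← Real.exp_add]; ring_nf
        _ = G a * Real.exp (2 * s) := by rw [haddf]
  have hT0 : (0:ℝ) ∈ Ico (0:ℝ) T := ⟨le_refl _, lt_of_le_of_lt ht.1 ht.2⟩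
  have hL0 : 0 ≤ L := by
    have := hL 0 hT0
    simpa using this
  have hn : (∫ τ in (0:ℝ)..t, f τ) ≤ ((Nat.ceil (2*L) : ℕ):ℝ) / 2 := by
    have h1 := hL t ht
    have h2 : (2*L : ℝ) ≤ (Nat.ceil (2*L) : ℕ) := Nat.le_ceil _
    linarith
  have hmain := main (Nat.ceil (2*L)) 0 t (le_refl _) ht.1 (le_refl _) hn
  have hG0 : G 0 = E 0 := by simp [hGdef]
  have hexple : Real.exp (2 * ∫ τ in (0:ℝ)..t, f τ) ≤ Real.exp (2 * L) := by
    apply Real.exp_le_exp.2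
    have := hL t ht
    linarith
  have hEt : E t ≤ G t := hEleG t ht.1 (le_refl _)
  have hfin : G t ≤ E 0 * Real.exp (2 * L) := by
    rw [hG0] at hmain
    calc G t ≤ E 0 * Real.exp (2 * ∫ τ in (0:ℝ)..t, f τ) := hmain
    _ ≤ E 0 * Real.exp (2 * L) := mul_le_mul_of_nonneg_left hexple (hE0 0)
  linarith

end GD

/-- Gronwall inequality with dyadic decomposition / logarithmic forcing:
if `E(t) ≤ E(0) + ∫₀ᵗ (A⟨τ⟩^{-5/4} + ⟨τ⟩⁻¹ h(τ)) E(τ) dτ` where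
`∫₀^{T'} h² ≤ B²(log(2+T'))²`, then `E(t) ≤ E(0) exp(C(A+B))` with an
absolute constant `C`. -/
theorem gronwall_dyadic_log_forcing :
    ∃ C > (0 : ℝ), ∀ (T A B : ℝ) (E h : ℝ → ℝ),
      0 ≤ A → 0 ≤ B →
      ContinuousOn E (Ico 0 T) → (∀ t, 0 ≤ E t) →
      Measurable h → (∀ τ, 0 ≤ h τ) →
      (∀ t ∈ Ico (0 : ℝ) T, IntervalIntegrable (fun τ => (h τ) ^ 2) volume 0 t) →
      (∀ T' ∈ Ico (0 : ℝ) T,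
        ∫ τ in (0 : ℝ)..T', (h τ) ^ 2 ≤ B ^ 2 * (Real.log (2 + T')) ^ 2) →
      (∀ t ∈ Ico (0 : ℝ) T,
        E t ≤ E 0 + ∫ τ in (0 : ℝ)..t,
          (A * (Real.sqrt (1 + τ ^ 2)) ^ (-(5 / 4 : ℝ))
            + (Real.sqrt (1 + τ ^ 2))⁻¹ * h τ) * E τ) →
      ∀ t ∈ Ico (0 : ℝ) T, E t ≤ E 0 * Real.exp (C * (A + B)) := by
  refine ⟨100, by norm_num, ?_⟩
  intro T A B E h hA hB hEc hE0 hm hh0 hi2 hsq hineq t ht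
  set f : ℝ → ℝ := fun τ => A * GD.ph τ + GD.wt τ * h τ with hfdef
  have hf0 : ∀ τ, 0 ≤ f τ := fun τ =>
    add_nonneg (mul_nonneg hA (GD.ph_nonneg τ)) (mul_nonneg (GD.wt_nonneg τ) (hh0 τ))
  have hfbd : ∀ τ, f τ ≤ A + h τ := by
    intro τ
    have h1 : A * GD.ph τ ≤ A * 1 := mul_le_mul_of_nonneg_left (GD.ph_le_one τ) hA
    have h2 : GD.wt τ * h τ ≤ 1 * h τ :=
      mul_le_mul_of_nonneg_right (GD.wt_le_one τ) (hh0 τ)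
    simp only [hfdef]; nlinarith
  have hfm : Measurable f :=
    ((GD.ph_cont.measurable).const_mul A).add ((GD.wt_cont.measurable).mul hm)
  have hfi : ∀ s ∈ Ico (0:ℝ) T, IntervalIntegrable f volume 0 s := by
    intro s hs
    exact ((continuous_const.mul GD.ph_cont).intervalIntegrable 0 s).add
      (GD.intInt_wh h hm hh0 s hs.1 (hi2 s hs))
  have hfEi : ∀ s ∈ Ico (0:ℝ) T, IntervalIntegrable (fun τ => f τ * E τ) volume 0 s := by
    intro s hs
    have hEc' : ContinuousOn E (Icc 0 s) :=
      hEc.mono (fun x hx => ⟨hx.1, lt_of_le_of_lt hx.2 hs.2⟩)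
    obtain ⟨M, hM⟩ := (isCompact_Icc).exists_bound_of_continuousOn hEc'
    have hM0 : 0 ≤ M := le_trans (norm_nonneg (E 0)) (hM 0 ⟨le_refl _, hs.1⟩)
    apply GD.intInt_dom _ (fun τ => M * A + M * h τ) s hs.1
    · apply AEStronglyMeasurable.mul (hfm.aestronglyMeasurable.restrict)
      have hsub : Ioc (0:ℝ) s ⊆ Ico (0:ℝ) T :=
        fun x hx => ⟨hx.1.le, lt_of_le_of_lt hx.2 hs.2⟩
      exact (hEc.aestronglyMeasurable measurableSet_Ico).mono_measure
        (Measure.restrict_mono hsub (le_refl _))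
    · exact (_root_.intervalIntegrable_const).add
        ((GD.intInt_h h hm hh0 s hs.1 (hi2 s hs)).const_mul M)
    · intro τ hτ
      have hEτ : ‖E τ‖ ≤ M := hM τ ⟨hτ.1.le, hτ.2⟩
      rw [norm_mul, Real.norm_eq_abs (f τ), abs_of_nonneg (hf0 τ)]
      calc f τ * ‖E τ‖ ≤ f τ * M := mul_le_mul_of_nonneg_left hEτ (hf0 τ)
      _ ≤ (A + h τ) * M := mul_le_mul_of_nonneg_right (hfbd τ) hM0
      _ = M * A + M * h τ := by ring
  have hL : ∀ s ∈ Ico (0:ℝ) T, (∫ τ in (0:ℝ)..s, f τ) ≤ 5 * A + 46 * B := by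
    intro s hs
    have hiA : IntervalIntegrable (fun τ => A * GD.ph τ) volume 0 s :=
      (continuous_const.mul GD.ph_cont).intervalIntegrable 0 s
    have hiW := GD.intInt_wh h hm hh0 s hs.1 (hi2 s hs)
    have hsplit : (∫ τ in (0:ℝ)..s, f τ)
        = (∫ τ in (0:ℝ)..s, A * GD.ph τ) + ∫ τ in (0:ℝ)..s, GD.wt τ * h τ := by
      simp only [hfdef]
      exact integral_add hiA hiW
    have h1 : (∫ τ in (0:ℝ)..s, A * GD.ph τ) ≤ 5 * A := by
      rw [intervalIntegral.integral_const_mul]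
      have := GD.partA s hs.1
      nlinarith
    have h2 := GD.forcing_h T B h hB hm hh0 hi2 hsq s hs
    rw [hsplit]; linarith
  have hmain := GD.gronwall T (5 * A + 46 * B) f E hf0 hE0 hfi hfEi hineq hL t ht
  have hexp : Real.exp (2 * (5 * A + 46 * B)) ≤ Real.exp (100 * (A + B)) := by
    apply Real.exp_le_exp.2; linarith
  calc E t ≤ E 0 * Real.exp (2 * (5 * A + 46 * B)) := hmain
  _ ≤ E 0 * Real.exp (100 * (A + B)) := mul_le_mul_of_nonneg_left hexp (hE0 0)
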